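/- arXiv:2110.05872 — 7 statements merged into one kernel-verified Lean document; each statement's English description precedes it below -/
import Mathlib

section
/- Let Λ be a left cancellative small category and let d : Λ → Γ be a length function satisfying the weak factorization property. Then d⁻¹(1) = Λ⁻¹, i.e. a morphism α of Λ satisfies d(α) = 1 if and only if α is invertible (in particular every identity morphism and every invertible morphism has length 1, and conversely every morphism of length 1 is invertible). -/
/-- A left cancellative small category (LCSC), presented as a set of morphisms
with source and range maps and a (total, but only meaningful on composable
pairs) composition. Identities are the morphisms of the form `src a` / `ran a`. -/
structure LCSC where
  Mor : Type
  src : Mor → Mor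
  ran : Mor → Mor
  comp : Mor → Mor → Mor
  src_src : ∀ a, src (src a) = src a
  ran_src : ∀ a, ran (src a) = src a
  src_ran : ∀ a, src (ran a) = ran a
  ran_ran : ∀ a, ran (ran a) = ran a
  comp_src : ∀ a, comp a (src a) = a
  id_comp : ∀ a, comp (ran a) a = a
  src_comp : ∀ a b, src a = ran b → src (comp a b) = src b
  ran_comp : ∀ a b, src a = ran b → ran (comp a b) = ran a
  assoc : ∀ a b c, src a = ran b → src b = ran c →
      comp (comp a b) c = comp a (comp b c)
  leftCancel : ∀ a b c, src a = ran b → src a = ran c →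
      comp a b = comp a c → b = c

namespace LCSC

variable (C : LCSC)

/-- `v` is an identity morphism (an object of `Λ⁰`). -/
def IsId (v : C.Mor) : Prop := C.src v = v ∧ C.ran v = v

/-- `a ∈ Λ⁻¹`, i.e. `a` is invertible. -/
def IsInvertible (a : C.Mor) : Prop :=
  ∃ b, C.src a = C.ran b ∧ C.src b = C.ran a ∧
    C.comp a b = C.ran a ∧ C.comp b a = C.src a

/-- The principal right ideal `aΛ`. -/
def Ideal (a : C.Mor) : Set C.Mor :=
  {x | ∃ c, C.src a = C.ran c ∧ x = C.comp a c}

/-- `a ≤ b` iff `b ∈ aΛ`, i.e. `a` is an initial segment of `b`. -/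
def le (a b : C.Mor) : Prop := b ∈ C.Ideal a

end LCSC
/-- `d : Λ → Γ ⊆ Q` is a length function: it takes values in the submonoid `Γ`
and is multiplicative on composable pairs. -/
def LCSC.LenFn (C : LCSC) {Q : Type} [Group Q] (Γ : Submonoid Q)
    (d : C.Mor → Q) : Prop :=
  (∀ a, d a ∈ Γ) ∧ ∀ a b, C.src a = C.ran b → d (C.comp a b) = d a * d b

/-- The weak factorization property (WFP) for a length function `d : Λ → Γ`. -/
def LCSC.WFP (C : LCSC) {Q : Type} [Group Q] (Γ : Submonoid Q)
    (d : C.Mor → Q) : Prop :=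
  ∀ a γ₁ γ₂, γ₁ ∈ Γ → γ₂ ∈ Γ → d a = γ₁ * γ₂ →
    ∃ a₁ a₂, C.src a₁ = C.ran a₂ ∧ a = C.comp a₁ a₂ ∧ d a₁ = γ₁ ∧ d a₂ = γ₂ ∧
      ∀ b₁ b₂, C.src b₁ = C.ran b₂ → a = C.comp b₁ b₂ → d b₁ = γ₁ → d b₂ = γ₂ →
        ∃ g₁ g₂, C.IsInvertible g₁ ∧ C.IsInvertible g₂ ∧
          C.src a₁ = C.ran g₁ ∧ b₁ = C.comp a₁ g₁ ∧
          C.src g₂ = C.ran a₂ ∧ b₂ = C.comp g₂ a₂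

namespace LCSC

variable (C : LCSC)

theorem aux_isInvertible_comp {x y : C.Mor} (hx : C.IsInvertible x)
    (hy : C.IsInvertible y) (hxy : C.src x = C.ran y) :
    C.IsInvertible (C.comp x y) := by
  obtain ⟨u, hxu, hux, hxu1, hux1⟩ := hx
  obtain ⟨v, hyv, hvy, hyv1, hvy1⟩ := hy
  have hranu : C.ran u = C.ran y := by rw [← hxu, hxy]
  have hranv : C.ran v = C.src y := hyv.symm
  have hvu : C.src v = C.ran u := by rw [hvy, hranu]
  refine ⟨C.comp v u, ?_, ?_, ?_, ?_⟩
  · rw [C.src_comp x y hxy, C.ran_comp v u hvu, hranv]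
  · rw [C.src_comp v u hvu, C.ran_comp x y hxy, hux]
  · have h1 : C.comp (C.comp x y) (C.comp v u) = C.comp x (C.comp y (C.comp v u)) := by
      apply C.assoc x y (C.comp v u) hxy
      rw [C.ran_comp v u hvu, hranv]
    have h2 : C.comp y (C.comp v u) = C.comp (C.comp y v) u := by
      refine (C.assoc y v u hyv ?_).symm
      rw [hvy, hranu]
    have h3 : C.comp (C.comp y v) u = u := by
      rw [hyv1, ← hranu, C.id_comp]
    rw [h1, h2, h3, hxu1, C.ran_comp x y hxy]
  · have h1 : C.comp (C.comp v u) (C.comp x y) = C.comp v (C.comp u (C.comp x y)) := by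
      apply C.assoc v u (C.comp x y) hvu
      rw [C.ran_comp x y hxy, hux]
    have h2 : C.comp u (C.comp x y) = C.comp (C.comp u x) y := by
      refine (C.assoc u x y hux hxy).symm
    have h3 : C.comp (C.comp u x) y = y := by
      rw [hux1, hxy, C.id_comp]
    rw [h1, h2, h3, hvy1, C.src_comp x y hxy]

/-- If `x g = ran x` with `g` invertible, then `x` is invertible. -/
theorem aux_left_invertible {x g : C.Mor} (hg : C.IsInvertible g)
    (hc : C.src x = C.ran g) (he : C.comp x g = C.ran x) : C.IsInvertible x := by
  obtain ⟨h, hgh, hhg, hgh1, hhg1⟩ := hg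
  have hsg : C.src g = C.ran x := by
    have := C.src_comp x g hc
    rw [he, C.src_ran] at this
    exact this.symm
  have hxh : x = h := by
    have e1 : x = C.comp x (C.src x) := (C.comp_src x).symm
    have e2 : C.src x = C.comp g h := by rw [hc, ← hgh1]
    have e3 : C.comp x (C.comp g h) = C.comp (C.comp x g) h :=
      (C.assoc x g h hc hgh).symm
    have e4 : C.ran h = C.ran x := by rw [← hgh, hsg]
    calc x = C.comp x (C.comp g h) := by rw [← e2, ← e1]
      _ = C.comp (C.comp x g) h := e3
      _ = C.comp (C.ran x) h := by rw [he]
      _ = h := by rw [← e4, C.id_comp]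
  rw [hxh]
  refine ⟨g, ?_, ?_, ?_, ?_⟩
  · rw [hhg]
  · rw [hgh]
  · rw [hhg1]; exact hgh
  · rw [hgh1]; exact hhg.symm

/-- If `g y = src y` with `g` invertible, then `y` is invertible. -/
theorem aux_right_invertible {g y : C.Mor} (hg : C.IsInvertible g)
    (hc : C.src g = C.ran y) (he : C.comp g y = C.src y) : C.IsInvertible y := by
  obtain ⟨k, hgk, hkg, hgk1, hkg1⟩ := hg
  have hrg : C.ran g = C.src y := by
    have := C.ran_comp g y hc
    rw [he, C.ran_src] at this
    exact this.symm
  have hyk : y = k := by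
    have e1 : y = C.comp (C.ran y) y := (C.id_comp y).symm
    have e2 : C.ran y = C.comp k g := by rw [← hc, ← hkg1]
    have e3 : C.comp (C.comp k g) y = C.comp k (C.comp g y) :=
      C.assoc k g y hkg hc
    have e4 : C.src k = C.src y := by rw [hkg, hrg]
    calc y = C.comp (C.comp k g) y := by rw [← e2, ← e1]
      _ = C.comp k (C.comp g y) := e3
      _ = C.comp k (C.src y) := by rw [he]
      _ = k := by rw [← e4, C.comp_src]
  rw [hyk]
  refine ⟨g, ?_, ?_, ?_, ?_⟩
  · rw [hkg]
  · rw [hgk]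
  · rw [hkg1]; exact hgk
  · rw [hgk1]; exact hkg.symm

theorem aux_d_ran {Q : Type} [Group Q] (Γ : Submonoid Q) {d : C.Mor → Q}
    (hd : C.LenFn Γ d) (a : C.Mor) : d (C.ran a) = 1 := by
  have hcomp : C.comp (C.ran a) (C.ran a) = C.ran a := by
    have := C.id_comp (C.ran a)
    rwa [C.ran_ran] at this
  have hsrc : C.src (C.ran a) = C.ran (C.ran a) := by rw [C.src_ran, C.ran_ran]
  have := hd.2 (C.ran a) (C.ran a) hsrc
  rw [hcomp] at this
  have h2 : d (C.ran a) * 1 = d (C.ran a) * d (C.ran a) := by rw [mul_one, ← this]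
  exact (mul_left_cancel h2).symm

theorem aux_d_src {Q : Type} [Group Q] (Γ : Submonoid Q) {d : C.Mor → Q}
    (hd : C.LenFn Γ d) (a : C.Mor) : d (C.src a) = 1 := by
  have hcomp : C.comp (C.src a) (C.src a) = C.src a := by
    have := C.comp_src (C.src a)
    rwa [C.src_src] at this
  have hsrc : C.src (C.src a) = C.ran (C.src a) := by rw [C.src_src, C.ran_src]
  have := hd.2 (C.src a) (C.src a) hsrc
  rw [hcomp] at this
  have h2 : d (C.src a) * 1 = d (C.src a) * d (C.src a) := by rw [mul_one, ← this]
  exact (mul_left_cancel h2).symm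

end LCSC

/-- If `d : Λ → Γ` is a length function on an LCSC `Λ` satisfying
the weak factorization property, then `d⁻¹(1) = Λ⁻¹`. -/
theorem lcsc_wfp_length_one_iff_invertible (C : LCSC) {Q : Type} [Group Q]
    (Γ : Submonoid Q) (hΓ : ∀ q ∈ Γ, q⁻¹ ∈ Γ → q = 1)
    (d : C.Mor → Q) (hd : C.LenFn Γ d) (hwfp : C.WFP Γ d) :
    ∀ a : C.Mor, d a = 1 ↔ C.IsInvertible a := by
  intro a
  constructor
  · intro h1
    obtain ⟨a₁, a₂, hc, ha, hda1, hda2, huniq⟩ :=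
      hwfp a 1 1 Γ.one_mem Γ.one_mem (by rw [h1, one_mul])
    -- factorization (ran a, a)
    obtain ⟨g₁, g₂, hg₁, hg₂, hag₁, hbg₁, hag₂, hbg₂⟩ :=
      huniq (C.ran a) a (by rw [C.src_ran]) (C.id_comp a).symm
        (C.aux_d_ran Γ hd a) h1
    -- factorization (a, src a)
    obtain ⟨g₁', g₂', hg₁', hg₂', hag₁', hbg₁', hag₂', hbg₂'⟩ :=
      huniq a (C.src a) (C.ran_src a).symm (C.comp_src a).symm h1
        (C.aux_d_src Γ hd a)
    -- a₁ is invertible: comp a₁ g₁ = ran a = ran a₁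
    have hran : C.ran a = C.ran a₁ := by rw [ha, C.ran_comp a₁ a₂ hc]
    have hsrc : C.src a = C.src a₂ := by rw [ha, C.src_comp a₁ a₂ hc]
    have hinv1 : C.IsInvertible a₁ :=
      C.aux_left_invertible hg₁ hag₁ (by rw [← hbg₁, hran])
    have hinv2 : C.IsInvertible a₂ :=
      C.aux_right_invertible hg₂' hag₂' (by rw [← hbg₂', hsrc])
    rw [ha]
    exact C.aux_isInvertible_comp hinv1 hinv2 hc
  · rintro ⟨b, hab, hba, hab1, hba1⟩
    have h1 : d a * d b = 1 := by
      rw [← hd.2 a b hab, hab1, C.aux_d_ran Γ hd]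
    have h2 : d b * d a = 1 := by
      rw [← hd.2 b a hba, hba1, C.aux_d_src Γ hd]
    have hinv : (d a)⁻¹ = d b := by
      exact inv_eq_of_mul_eq_one_right h1
    exact hΓ (d a) (hd.1 a) (by rw [hinv]; exact hd.1 b)
end

section
/- Let Λ be a left cancellative small category and let d : Λ → Γ be a length function satisfying the weak factorization property. Then Λ is right cancellative (i.e. βα = γα implies β = γ whenever the compositions are defined) if and only if Λ is action-free (i.e. whenever gγ = γ for some γ ∈ Λ and invertible g ∈ Λ⁻¹, then g = r(γ)). -/
/-- `Λ` is right cancellative: `βα = γα` implies `β = γ`. -/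
def LCSC.RightCancellative (C : LCSC) : Prop :=
  ∀ a b c, C.src b = C.ran a → C.src c = C.ran a →
    C.comp b a = C.comp c a → b = c

/-- `Λ` is action-free: whenever `gγ = γ` with `g ∈ Λ⁻¹`, then `g = r(γ)`. -/
def LCSC.ActionFree (C : LCSC) : Prop :=
  ∀ g a, C.IsInvertible g → C.src g = C.ran a → C.comp g a = a → g = C.ran a

/-- Composition of invertibles is invertible. -/
lemma LCSC.comp_invertible (C : LCSC) {g h : C.Mor} (hg : C.IsInvertible g)
    (hh : C.IsInvertible h) (hc : C.src g = C.ran h) :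
    C.IsInvertible (C.comp g h) := by
  obtain ⟨g', hg1, hg2, hg3, hg4⟩ := hg
  obtain ⟨h', hh1, hh2, hh3, hh4⟩ := hh
  have e1 : C.src h' = C.ran g' := by rw [hh2, ← hc, hg1]
  have e2 : C.ran h = C.ran g' := by rw [← hc, hg1]
  refine ⟨C.comp h' g', ?_, ?_, ?_, ?_⟩
  · rw [C.src_comp g h hc, C.ran_comp h' g' e1, hh1]
  · rw [C.src_comp h' g' e1, C.ran_comp g h hc, hg2]
  · calc C.comp (C.comp g h) (C.comp h' g')
        = C.comp g (C.comp h (C.comp h' g')) :=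
          C.assoc g h _ hc (by rw [C.ran_comp h' g' e1, ← hh1])
      _ = C.comp g (C.comp (C.comp h h') g') := by
          rw [C.assoc h h' g' hh1 e1]
      _ = C.comp g (C.comp (C.ran h) g') := by rw [hh3]
      _ = C.comp g (C.comp (C.ran g') g') := by rw [e2]
      _ = C.comp g g' := by rw [C.id_comp]
      _ = C.ran g := hg3
      _ = C.ran (C.comp g h) := (C.ran_comp g h hc).symm
  · calc C.comp (C.comp h' g') (C.comp g h)
        = C.comp h' (C.comp g' (C.comp g h)) :=
          C.assoc h' g' _ e1 (by rw [hg2, C.ran_comp g h hc])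
      _ = C.comp h' (C.comp (C.comp g' g) h) := by
          rw [C.assoc g' g h hg2 hc]
      _ = C.comp h' (C.comp (C.src g) h) := by rw [hg4]
      _ = C.comp h' (C.comp (C.ran h) h) := by rw [hc]
      _ = C.comp h' h := by rw [C.id_comp]
      _ = C.src h := hh4
      _ = C.src (C.comp g h) := (C.src_comp g h hc).symm

/-- An LCSC with a length function satisfying the WFP is right
cancellative if and only if it is action-free. -/
theorem lcsc_wfp_rightCancellative_iff_actionFree (C : LCSC) {Q : Type}
    [Group Q] (Γ : Submonoid Q) (hΓ : ∀ q ∈ Γ, q⁻¹ ∈ Γ → q = 1)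
    (d : C.Mor → Q) (hd : C.LenFn Γ d) (hwfp : C.WFP Γ d) :
    C.RightCancellative ↔ C.ActionFree := by
  constructor
  · -- right cancellative → action free
    intro hRC g a hg hsg hga
    have h1 : C.comp g a = C.comp (C.ran a) a := by rw [hga, C.id_comp]
    exact hRC a g (C.ran a) hsg (C.src_ran a) h1
  · -- action free → right cancellative
    intro hA a b c hba hca heq
    -- lengths
    have hdx : d (C.comp b a) = d b * d a := hd.2 b a hba
    have hdbc : d b = d c := by
      have h1 : d (C.comp c a) = d c * d a := hd.2 c a hca
      rw [heq, h1] at hdx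
      exact (mul_right_cancel hdx).symm
    obtain ⟨a₁, a₂, h12, hx12, hd1, hd2, huniq⟩ :=
      hwfp (C.comp b a) (d b) (d a) (hd.1 b) (hd.1 a) hdx
    obtain ⟨g₁, g₂, hg₁i, hg₂i, hr1, hb1, hr2, ha2⟩ :=
      huniq b a hba rfl rfl rfl
    obtain ⟨g₁', g₂', hg₁'i, hg₂'i, hr1', hc1, hr2', ha2'⟩ :=
      huniq c a hca heq hdbc.symm rfl
    obtain ⟨h₂, hs2, hs2', hgh, hhg⟩ := hg₂i
    -- basic range facts
    have hrana : C.ran a = C.ran g₂ := by rw [ha2, C.ran_comp g₂ a₂ hr2]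
    have hrana' : C.ran a = C.ran g₂' := by rw [ha2', C.ran_comp g₂' a₂ hr2']
    have hsh₂ : C.src h₂ = C.ran a := by rw [hs2', hrana]
    have ha₂eq : a₂ = C.comp h₂ a := by
      rw [ha2, ← C.assoc h₂ g₂ a₂ hs2' hr2, hhg, hr2, C.id_comp]
    -- g₂' = g₂
    have hck : C.src g₂' = C.ran h₂ := by rw [hr2', ← hr2, hs2]
    have hki : C.IsInvertible (C.comp g₂' h₂) :=
      C.comp_invertible hg₂'i ⟨g₂, hs2', hs2, by rw [hhg, hs2], by rw [hgh, ← hs2']⟩ hck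
    have hsk : C.src (C.comp g₂' h₂) = C.ran a := by
      rw [C.src_comp _ _ hck, hsh₂]
    have hka : C.comp (C.comp g₂' h₂) a = a := by
      rw [C.assoc g₂' h₂ a hck hsh₂, ← ha₂eq, ← ha2']
    have hk : C.comp g₂' h₂ = C.ran a := hA _ a hki hsk hka
    have hg₂eq : g₂' = g₂ := by
      have h1 : C.comp (C.comp g₂' h₂) g₂ = g₂' := by
        rw [C.assoc g₂' h₂ g₂ hck hs2', hhg, hr2, ← hr2', C.comp_src]
      rw [hk, hrana, C.id_comp] at h1
      exact h1.symm
    -- comp g₁ g₂ = ran a₂, and same for primed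
    have hsg₁ : C.src g₁ = C.ran a := by
      have h1 := C.src_comp a₁ g₁ hr1
      rw [← hb1] at h1
      rw [← h1, hba]
    have hsg₁' : C.src g₁' = C.ran a := by
      have h1 := C.src_comp a₁ g₁' hr1'
      rw [← hc1] at h1
      rw [← h1, hca]
    have hg₁a : C.comp g₁ a = a₂ := by
      refine C.leftCancel a₁ _ _ (by rw [C.ran_comp g₁ a hsg₁]; exact hr1) h12 ?_
      rw [← C.assoc a₁ g₁ a hr1 hsg₁, ← hb1, ← hx12]
    have hg₁'a : C.comp g₁' a = a₂ := by
      refine C.leftCancel a₁ _ _ (by rw [C.ran_comp g₁' a hsg₁']; exact hr1') h12 ?_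
      rw [← C.assoc a₁ g₁' a hr1' hsg₁', ← hc1, ← heq, ← hx12]
    have hg₁g₂ : C.comp g₁ g₂ = C.ran a₂ := by
      refine hA _ a₂ (C.comp_invertible hg₁i ⟨h₂, hs2, hs2', hgh, hhg⟩
        (by rw [hsg₁, hrana])) (by rw [C.src_comp g₁ g₂ (by rw [hsg₁, hrana]), hr2]) ?_
      rw [C.assoc g₁ g₂ a₂ (by rw [hsg₁, hrana]) hr2, ← ha2, hg₁a]
    have hg₁'g₂ : C.comp g₁' g₂ = C.ran a₂ := by
      refine hA _ a₂ (C.comp_invertible hg₁'i ⟨h₂, hs2, hs2', hgh, hhg⟩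
        (by rw [hsg₁', hrana])) (by rw [C.src_comp g₁' g₂ (by rw [hsg₁', hrana]), hr2]) ?_
      rw [C.assoc g₁' g₂ a₂ (by rw [hsg₁', hrana]) hr2, ← hg₂eq, ← ha2', hg₁'a]
    -- conclude g₁ = h₂ = g₁'
    have key : ∀ g, C.src g = C.ran a → C.comp g g₂ = C.ran a₂ → g = h₂ := by
      intro g hsg hgg₂
      have h1 : C.comp (C.comp g g₂) h₂ = g := by
        rw [C.assoc g g₂ h₂ (by rw [hsg, hrana]) hs2, hgh, ← hrana, ← hsg, C.comp_src]
      rw [hgg₂, ← hr2, hs2, C.id_comp] at h1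
      exact h1.symm
    have hg₁eq : g₁ = g₁' := by
      rw [key g₁ hsg₁ hg₁g₂, key g₁' hsg₁' hg₁'g₂]
    rw [hb1, hc1, hg₁eq]
end

section
/- Let Λ be a left cancellative small category with length function d : Λ → Γ. Given a partial isomorphism f ∈ PIso(Λ, d) with domain object v and any α ∈ vΛ, there exists a unique function f|α : s(α)Λ → s(f(α))Λ belonging to PIso(Λ, d) such that f(αβ) = f(α)·f|α(β) for every β ∈ s(α)Λ. -/
/-- A partial isomorphism `f ∈ PIso(Λ, d)`: a bijection `f : vΛ → wΛ` (for
objects `v = dom`, `w = cod`) with `f(αΛ) = f(α)Λ`, `f(v) = w` and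
`d(f(α)) = d(α)`. -/
structure PIso (C : LCSC) {Q : Type} (d : C.Mor → Q) where
  dom : C.Mor
  cod : C.Mor
  dom_isId : C.IsId dom
  cod_isId : C.IsId cod
  map : (a : C.Mor) → C.ran a = dom → C.Mor
  ran_map : ∀ a (ha : C.ran a = dom), C.ran (map a ha) = cod
  inj : ∀ a b (ha : C.ran a = dom) (hb : C.ran b = dom),
      map a ha = map b hb → a = b
  surj : ∀ b, C.ran b = cod → ∃ a, ∃ ha : C.ran a = dom, map a ha = b
  map_dom : ∀ h : C.ran dom = dom, map dom h = cod
  d_map : ∀ a (ha : C.ran a = dom), d (map a ha) = d a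
  ideal_fwd : ∀ a (ha : C.ran a = dom) c (_ : C.src a = C.ran c)
      (h' : C.ran (C.comp a c) = dom),
      ∃ e, C.src (map a ha) = C.ran e ∧
        map (C.comp a c) h' = C.comp (map a ha) e
  ideal_bwd : ∀ a (ha : C.ran a = dom) e (_ : C.src (map a ha) = C.ran e),
      ∃ c, ∃ _ : C.src a = C.ran c, ∃ h' : C.ran (C.comp a c) = dom,
        map (C.comp a c) h' = C.comp (map a ha) e

/-- The identity partial isomorphism `id_v : vΛ → vΛ`. -/
def idPIso (C : LCSC) {Q : Type} (d : C.Mor → Q) (v : C.Mor) (hv : C.IsId v) :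
    PIso C d where
  dom := v
  cod := v
  dom_isId := hv
  cod_isId := hv
  map a _ := a
  ran_map _ ha := ha
  inj _ _ _ _ h := h
  surj b hb := ⟨b, hb, rfl⟩
  map_dom _ := rfl
  d_map _ _ := rfl
  ideal_fwd _ _ c hc _ := ⟨c, hc, rfl⟩
  ideal_bwd a ha e he := ⟨e, he, (C.ran_comp a e he).trans ha, rfl⟩

/-- `g` is the restriction `f|α` of `f` at `α ∈ dom(f)Λ`: a partial isomorphism
`f|α : s(α)Λ → s(f(α))Λ` satisfying `f(αβ) = f(α)·f|α(β)` for all `β ∈ s(α)Λ`. -/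
def IsRestriction (C : LCSC) {Q : Type} (d : C.Mor → Q) (f : PIso C d)
    (a : C.Mor) (ha : C.ran a = f.dom) (g : PIso C d) : Prop :=
  g.dom = C.src a ∧ g.cod = C.src (f.map a ha) ∧
  ∀ b (_ : C.src a = C.ran b) (h' : C.ran (C.comp a b) = f.dom)
    (hb' : C.ran b = g.dom),
    f.map (C.comp a b) h' = C.comp (f.map a ha) (g.map b hb')

section Restriction

variable {C : LCSC} {Q : Type} {d : C.Mor → Q}

theorem PIso.map_congr (f : PIso C d) {x y : C.Mor} (h : x = y)
    (hx : C.ran x = f.dom) (hy : C.ran y = f.dom) : f.map x hx = f.map y hy := by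
  subst h; rfl

theorem PIso.ext' (g g' : PIso C d) (hdom : g.dom = g'.dom)
    (hcod : g.cod = g'.cod)
    (hmap : ∀ b (hb : C.ran b = g.dom) (hb' : C.ran b = g'.dom),
      g.map b hb = g'.map b hb') : g = g' := by
  obtain ⟨dom, cod, p1, p2, map, p3, p4, p5, p6, p7, p8, p9⟩ := g
  obtain ⟨dom', cod', p1', p2', map', p3', p4', p5', p6', p7', p8', p9'⟩ := g'
  simp only at hdom hcod
  subst hdom; subst hcod
  have : map = map' := by
    funext b hb
    exact hmap b hb hb
  subst this
  rfl

variable (f : PIso C d) (a : C.Mor) (ha : C.ran a = f.dom)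

/-- The value `f|α(β)`, obtained from `ideal_fwd` by choice. -/
noncomputable def resMap (b : C.Mor) (hb : C.ran b = C.src a) : C.Mor :=
  (f.ideal_fwd a ha b hb.symm ((C.ran_comp a b hb.symm).trans ha)).choose

theorem resMap_spec (b : C.Mor) (hb : C.ran b = C.src a) :
    C.src (f.map a ha) = C.ran (resMap f a ha b hb) ∧
    ∀ h' : C.ran (C.comp a b) = f.dom,
      f.map (C.comp a b) h' = C.comp (f.map a ha) (resMap f a ha b hb) := by
  have h := (f.ideal_fwd a ha b hb.symm ((C.ran_comp a b hb.symm).trans ha)).choose_spec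
  exact ⟨h.1, fun _ => h.2⟩

theorem resMap_unique (b : C.Mor) (hb : C.ran b = C.src a) (e : C.Mor)
    (he : C.src (f.map a ha) = C.ran e)
    (h' : C.ran (C.comp a b) = f.dom)
    (heq : f.map (C.comp a b) h' = C.comp (f.map a ha) e) :
    e = resMap f a ha b hb := by
  obtain ⟨h1, h2⟩ := resMap_spec f a ha b hb
  exact C.leftCancel (f.map a ha) e (resMap f a ha b hb) he h1
    (heq.symm.trans (h2 h'))

/-- The restriction `f|α` as a partial isomorphism. -/
noncomputable def resPIso [Group Q] {Γ : Submonoid Q} (hd : C.LenFn Γ d) :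
    PIso C d where
  dom := C.src a
  cod := C.src (f.map a ha)
  dom_isId := ⟨C.src_src a, C.ran_src a⟩
  cod_isId := ⟨C.src_src _, C.ran_src _⟩
  map b hb := resMap f a ha b hb
  ran_map b hb := ((resMap_spec f a ha b hb).1).symm
  inj b b' hb hb' heq := by
    have h1 := (resMap_spec f a ha b hb).2 ((C.ran_comp a b hb.symm).trans ha)
    have h2 := (resMap_spec f a ha b' hb').2 ((C.ran_comp a b' hb'.symm).trans ha)
    have heq' : resMap f a ha b hb = resMap f a ha b' hb' := heq
    rw [heq'] at h1
    have := f.inj _ _ _ _ (h1.trans h2.symm)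
    exact C.leftCancel a b b' hb.symm hb'.symm this
  surj e he := by
    obtain ⟨c, hc, h'', hspec⟩ := f.ideal_bwd a ha e he.symm
    exact ⟨c, hc.symm, (resMap_unique f a ha c hc.symm e he.symm h'' hspec).symm⟩
  map_dom h := by
    refine (resMap_unique f a ha (C.src a) h (C.src (f.map a ha))
      (C.ran_src _).symm ((C.ran_comp a (C.src a) h.symm).trans ha) ?_).symm
    rw [f.map_congr (C.comp_src a) _ ha, C.comp_src]
  d_map b hb := by
    have h1 := (resMap_spec f a ha b hb).1
    have h2 := (resMap_spec f a ha b hb).2 ((C.ran_comp a b hb.symm).trans ha)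
    have e1 : d (f.map (C.comp a b) ((C.ran_comp a b hb.symm).trans ha)) = d a * d b := by
      rw [f.d_map, hd.2 a b hb.symm]
    have e2 : d (C.comp (f.map a ha) (resMap f a ha b hb)) =
        d a * d (resMap f a ha b hb) := by
      rw [hd.2 _ _ h1, f.d_map]
    rw [h2, e2] at e1
    show d (resMap f a ha b hb) = d b
    exact mul_left_cancel e1
  ideal_fwd b hb c hc h' := by
    have hab : C.ran (C.comp a b) = f.dom := (C.ran_comp a b hb.symm).trans ha
    have hc' : C.src (C.comp a b) = C.ran c := (C.src_comp a b hb.symm).trans hc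
    have h'' : C.ran (C.comp (C.comp a b) c) = f.dom :=
      (C.ran_comp _ c hc').trans hab
    obtain ⟨e, he1, he2⟩ := f.ideal_fwd (C.comp a b) hab c hc' h''
    have hfab := (resMap_spec f a ha b hb).2 hab
    have hsrc : C.src (f.map (C.comp a b) hab) = C.src (resMap f a ha b hb) := by
      rw [hfab, C.src_comp _ _ (resMap_spec f a ha b hb).1]
    rw [hsrc] at he1
    refine ⟨e, he1, ?_⟩
    refine (resMap_unique f a ha (C.comp b c) h'
      (C.comp (resMap f a ha b hb) e)
      (by rw [C.ran_comp _ _ he1]; exact (resMap_spec f a ha b hb).1)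
      ((C.ran_comp a (C.comp b c) h'.symm).trans ha) ?_).symm
    have hassoc : C.comp (C.comp a b) c = C.comp a (C.comp b c) :=
      C.assoc a b c hb.symm hc
    rw [← f.map_congr hassoc h''
      ((C.ran_comp a (C.comp b c) h'.symm).trans ha), he2, hfab,
      C.assoc _ _ _ (resMap_spec f a ha b hb).1 he1]
  ideal_bwd b hb e he := by
    have hab : C.ran (C.comp a b) = f.dom := (C.ran_comp a b hb.symm).trans ha
    have hfab := (resMap_spec f a ha b hb).2 hab
    have hsrc : C.src (f.map (C.comp a b) hab) = C.ran e := by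
      rw [hfab, C.src_comp _ _ (resMap_spec f a ha b hb).1]; exact he
    obtain ⟨c, hc, h'', hspec⟩ := f.ideal_bwd (C.comp a b) hab e hsrc
    have hbc : C.src b = C.ran c := (C.src_comp a b hb.symm).symm.trans hc
    have hrbc : C.ran (C.comp b c) = C.src a := (C.ran_comp b c hbc).trans hb
    refine ⟨c, hbc, hrbc, ?_⟩
    refine (resMap_unique f a ha (C.comp b c) hrbc
      (C.comp (resMap f a ha b hb) e)
      (by rw [C.ran_comp _ _ he]; exact (resMap_spec f a ha b hb).1)
      ((C.ran_comp a (C.comp b c) hrbc.symm).trans ha) ?_).symm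
    have hassoc : C.comp (C.comp a b) c = C.comp a (C.comp b c) :=
      C.assoc a b c hb.symm hbc
    rw [← f.map_congr hassoc h''
      ((C.ran_comp a (C.comp b c) hrbc.symm).trans ha), hspec, hfab,
      C.assoc _ _ _ (resMap_spec f a ha b hb).1 he]

end Restriction

/-- For `f ∈ PIso(Λ, d)` and `α ∈ dom(f)Λ`, there is a unique
partial isomorphism `f|α : s(α)Λ → s(f(α))Λ` in `PIso(Λ, d)` such that

`f(αβ) = f(α)·f|α(β)` for every `β ∈ s(α)Λ`. -/
theorem piso_restriction_exists_unique (C : LCSC) {Q : Type} [Group Q]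
    (Γ : Submonoid Q) (hΓ : ∀ q ∈ Γ, q⁻¹ ∈ Γ → q = 1)
    (d : C.Mor → Q) (hd : C.LenFn Γ d)
    (f : PIso C d) (a : C.Mor) (ha : C.ran a = f.dom) :
    ∃! g : PIso C d, IsRestriction C d f a ha g := by
  refine ⟨resPIso f a ha hd, ⟨rfl, rfl, ?_⟩, ?_⟩
  · intro b hb h' hb'
    exact (resMap_spec f a ha b hb').2 h'
  · rintro g ⟨hdom, hcod, hmap⟩
    refine PIso.ext' g _ hdom hcod ?_
    intro b hb hb'
    have hcomp : C.src a = C.ran b := hb'.symm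
    have h' : C.ran (C.comp a b) = f.dom := (C.ran_comp a b hcomp).trans ha
    refine resMap_unique f a ha b hb' (g.map b hb) ?_ h' (hmap b hcomp h' hb)
    rw [g.ran_map b hb, hcod]
end

section
/- Let (Λ, d, G, φ) be a category system and Λ ⋈ᵠ G the associated Zappa–Szép product. Fix an object (v, v) of Λ ⋈ᵠ G, let F ⊆ (v, v)(Λ ⋈ᵠ G), and set H := {α ∈ vΛ : there exists g ∈ G with (α, g) ∈ F}. Then F is exhaustive at (v, v) if and only if H is exhaustive at v. -/
/-- A discrete groupoid, presented as a set of morphisms with source, range,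
composition (total, but only meaningful on composable pairs) and inverse. -/
structure Grpd where
  Mor : Type
  src : Mor → Mor
  ran : Mor → Mor
  comp : Mor → Mor → Mor
  inv : Mor → Mor
  src_src : ∀ a, src (src a) = src a
  ran_src : ∀ a, ran (src a) = src a
  src_ran : ∀ a, src (ran a) = ran a
  ran_ran : ∀ a, ran (ran a) = ran a
  comp_src : ∀ a, comp a (src a) = a
  id_comp : ∀ a, comp (ran a) a = a
  src_comp : ∀ a b, src a = ran b → src (comp a b) = src b
  ran_comp : ∀ a b, src a = ran b → ran (comp a b) = ran a
  assoc : ∀ a b c, src a = ran b → src b = ran c →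
      comp (comp a b) c = comp a (comp b c)
  src_inv : ∀ a, src (inv a) = ran a
  ran_inv : ∀ a, ran (inv a) = src a
  comp_inv : ∀ a, comp a (inv a) = ran a
  inv_comp : ∀ a, comp (inv a) a = src a

/-- A category system `(Λ, d, G, φ)`: a discrete groupoid `G` acting on the
LCSC `Λ` by partial isomorphisms preserving the length function `d` (the action
is the homomorphism `g ↦ φ(g) : θ(s(g))Λ → θ(r(g))Λ`, written `act`; `θ` is the
identification of the units of `G` with the objects of `Λ`, a bijection on
units), together with a category cocycle `cocy = φ(·,·)` satisfying the cocycle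
identity and conditions (1)-(5) of a category cocycle. -/
structure CatSystem (C : LCSC) (G : Grpd) {Q : Type} (d : C.Mor → Q) where
  θ : G.Mor → C.Mor
  act : G.Mor → C.Mor → C.Mor
  cocy : G.Mor → C.Mor → G.Mor
  θ_isId : ∀ u, G.src u = u → C.IsId (θ u)
  θ_inj : ∀ u v, G.src u = u → G.src v = v → θ u = θ v → u = v
  θ_surj : ∀ w, C.IsId w → ∃ u, G.src u = u ∧ θ u = w
  ran_act : ∀ g a, θ (G.src g) = C.ran a → C.ran (act g a) = θ (G.ran g)
  act_unit : ∀ g, act g (θ (G.src g)) = θ (G.ran g)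
  d_act : ∀ g a, θ (G.src g) = C.ran a → d (act g a) = d a
  act_id : ∀ u a, G.src u = u → θ u = C.ran a → act u a = a
  act_comp : ∀ g h a, G.src g = G.ran h → θ (G.src h) = C.ran a →
      act (G.comp g h) a = act g (act h a)
  act_inj : ∀ g a b, θ (G.src g) = C.ran a → θ (G.src g) = C.ran b →
      act g a = act g b → a = b
  cocy_identity : ∀ g h a, G.src g = G.ran h → θ (G.src h) = C.ran a →
      cocy (G.comp g h) a = G.comp (cocy g (act h a)) (cocy h a)
  cocy_unit : ∀ g, cocy g (θ (G.src g)) = g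
  src_act : ∀ g a, θ (G.src g) = C.ran a →
      C.src (act g a) = θ (G.ran (cocy g a))
  cocy_id : ∀ u a, G.src u = u → θ u = C.ran a →
      G.src (cocy u a) = cocy u a ∧ θ (cocy u a) = C.src a
  cocy_comp : ∀ g a b, θ (G.src g) = C.ran a → C.src a = C.ran b →
      cocy g (C.comp a b) = cocy (cocy g a) b
  act_morph : ∀ g a b, θ (G.src g) = C.ran a → C.src a = C.ran b →
      act g (C.comp a b) = C.comp (act g a) (act (cocy g a) b)

/-- A pair `(α, g)` is a morphism of the Zappa–Szép product `Λ ⋈ᵠ G`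
when `s(α) = r(g)` (under the identification `θ` of units with objects). -/
def ZSValid {C : LCSC} {G : Grpd} {Q : Type} {d : C.Mor → Q}
    (S : CatSystem C G d) (p : C.Mor × G.Mor) : Prop :=
  C.src p.1 = S.θ (G.ran p.2)

/-- `(α, g)` and `(β, h)` are composable in `Λ ⋈ᵠ G`: `s(α, g) = r(β, h)`. -/
def ZSComposable {C : LCSC} {G : Grpd} {Q : Type} {d : C.Mor → Q}
    (S : CatSystem C G d) (p q : C.Mor × G.Mor) : Prop :=
  S.θ (G.src p.2) = C.ran q.1

/-- Composition in the Zappa–Szép product: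
`(α, g)(β, h) = (α(g·β), φ(g, β)h)`. -/
def ZSComp {C : LCSC} {G : Grpd} {Q : Type} {d : C.Mor → Q}
    (S : CatSystem C G d) (p q : C.Mor × G.Mor) : C.Mor × G.Mor :=
  (C.comp p.1 (S.act p.2 q.1), G.comp (S.cocy p.2 q.1) q.2)

/-- The principal right ideal `(α, g)(Λ ⋈ᵠ G)` of `Λ ⋈ᵠ G`. -/
def ZSIdeal {C : LCSC} {G : Grpd} {Q : Type} {d : C.Mor → Q}
    (S : CatSystem C G d) (p : C.Mor × G.Mor) : Set (C.Mor × G.Mor) :=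
  {x | ∃ q, ZSValid S q ∧ ZSComposable S p q ∧ x = ZSComp S p q}

/-- A morphism `(α, g)` of `Λ ⋈ᵠ G` is invertible: it has a two-sided inverse,
the composites being the identity morphisms of `Λ ⋈ᵠ G` (which are the pairs
`(θ(u), u)` for `u` a unit of `G`). -/
def ZSInvertible {C : LCSC} {G : Grpd} {Q : Type} {d : C.Mor → Q}
    (S : CatSystem C G d) (p : C.Mor × G.Mor) : Prop :=
  ∃ q, ZSValid S q ∧ ZSComposable S p q ∧ ZSComposable S q p ∧
    (∃ u, G.src u = u ∧ S.θ u = C.ran p.1 ∧ ZSComp S p q = (S.θ u, u)) ∧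
    (∃ u, G.src u = u ∧ S.θ u = C.ran q.1 ∧ ZSComp S q p = (S.θ u, u))

/-- `H ⊆ vΛ` is exhaustive at `v`. -/
def CExhaustive (C : LCSC) (v : C.Mor) (H : Set C.Mor) : Prop :=
  ∀ γ, C.ran γ = v → ∃ β ∈ H, (C.Ideal β ∩ C.Ideal γ).Nonempty

/-- `F ⊆ (v,v)(Λ ⋈ᵠ G)` is exhaustive at `(v, v)`. -/
def ZSExhaustive {C : LCSC} {G : Grpd} {Q : Type} {d : C.Mor → Q}
    (S : CatSystem C G d) (v : C.Mor) (F : Set (C.Mor × G.Mor)) : Prop :=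
  ∀ q, ZSValid S q → C.ran q.1 = v →
    ∃ p ∈ F, (ZSIdeal S p ∩ ZSIdeal S q).Nonempty

/-- For an object `(v, v)` of `Λ ⋈ᵠ G` and
`F ⊆ (v, v)(Λ ⋈ᵠ G)`, with `H := {α ∈ vΛ : ∃ g, (α, g) ∈ F}`, the set `F` is
exhaustive at `(v, v)` if and only if `H` is exhaustive at `v`. -/
theorem zs_exhaustive_iff (C : LCSC) (G : Grpd) {Q : Type}
    [Group Q] (Γ : Submonoid Q) (hΓ : ∀ q ∈ Γ, q⁻¹ ∈ Γ → q = 1)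
    (d : C.Mor → Q) (hd : C.LenFn Γ d) (S : CatSystem C G d)
    (v : C.Mor) (hv : C.IsId v) (F : Set (C.Mor × G.Mor))
    (hF : ∀ p ∈ F, ZSValid S p ∧ C.ran p.1 = v) :
    ZSExhaustive S v F ↔
      CExhaustive C v {a | C.ran a = v ∧ ∃ g, (a, g) ∈ F} := by
  constructor
  · -- forward
    intro hZ γ hγ
    -- src γ is an identity
    have hsid : C.IsId (C.src γ) := ⟨C.src_src γ, C.ran_src γ⟩
    obtain ⟨u, hu, hθu⟩ := S.θ_surj _ hsid
    have hranu : G.ran u = u := by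
      conv_lhs => rw [← hu]
      rw [G.ran_src, hu]
    have hqv : ZSValid S (γ, u) := by
      simp only [ZSValid, hranu, hθu]
    obtain ⟨p, hpF, x, hx1, hx2⟩ := hZ (γ, u) hqv hγ
    refine ⟨p.1, ⟨(hF p hpF).2, p.2, hpF⟩, x.1, ?_, ?_⟩
    · obtain ⟨q1, hq1v, hq1c, hq1e⟩ := hx1
      refine ⟨S.act p.2 q1.1, ?_, by rw [hq1e]; rfl⟩
      rw [S.ran_act _ _ hq1c, ← (hF p hpF).1]
    · obtain ⟨q2, hq2v, hq2c, hq2e⟩ := hx2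
      refine ⟨S.act u q2.1, ?_, by rw [hq2e]; rfl⟩
      rw [S.ran_act _ _ hq2c, hranu, hθu]
  · -- backward
    intro hC q hqv hqran
    obtain ⟨β, ⟨hβv, g, hβF⟩, x, ⟨c, hc, hxc⟩, ⟨c', hc', hxc'⟩⟩ := hC q.1 hqran
    set γ := q.1
    set h := q.2
    have hpv : ZSValid S (β, g) := (hF _ hβF).1
    -- key facts
    have hrc : S.θ (G.ran g) = C.ran c := by rw [← hc]; exact hpv.symm
    have hrc' : S.θ (G.ran h) = C.ran c' := by rw [← hc']; exact hqv.symm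
    -- common γ-side setup generalized as a lemma-in-proof
    have key : ∀ (a : C.Mor) (k : G.Mor) (e : C.Mor),
        S.θ (G.ran k) = C.ran e →
        ∃ r : C.Mor × G.Mor, ZSValid S r ∧ ZSComposable S (a, k) r ∧
          ZSComp S (a, k) r = (C.comp a e, S.cocy (G.ran k) e) ∧
          G.src (S.cocy (G.ran k) e) = S.cocy (G.ran k) e ∧
          S.θ (S.cocy (G.ran k) e) = C.src e := by
      intro a k e hre
      have hsinv : S.θ (G.src (G.inv k)) = C.ran e := by rw [G.src_inv]; exact hre
      refine ⟨(S.act (G.inv k) e, S.cocy (G.inv k) e), ?_, ?_, ?_, ?_, ?_⟩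
      · exact S.src_act (G.inv k) e hsinv
      · show S.θ (G.src k) = C.ran (S.act (G.inv k) e)
        rw [S.ran_act _ _ hsinv, G.ran_inv]
      · have hact : S.act k (S.act (G.inv k) e) = e := by
          rw [← S.act_comp k (G.inv k) e (by rw [G.ran_inv]) hsinv, G.comp_inv]
          exact S.act_id _ _ (G.src_ran k) hre
        have hcocy : G.comp (S.cocy k (S.act (G.inv k) e)) (S.cocy (G.inv k) e)
            = S.cocy (G.ran k) e := by
          rw [← S.cocy_identity k (G.inv k) e (by rw [G.ran_inv]) hsinv,
            G.comp_inv]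
        simp only [ZSComp]
        rw [hact, hcocy]
      · exact (S.cocy_id (G.ran k) e (G.src_ran k) hre).1
      · exact (S.cocy_id (G.ran k) e (G.src_ran k) hre).2
    obtain ⟨r1, hr1v, hr1c, hr1e, hu1, hθ1⟩ := key β g c hrc
    obtain ⟨r2, hr2v, hr2c, hr2e, hu2, hθ2⟩ := key γ h c' hrc'
    have hsx : C.src c = C.src c' := by
      have h1 := C.src_comp β c hc
      have h2 := C.src_comp γ c' hc'
      rw [← hxc] at h1; rw [← hxc'] at h2; rw [← h1, ← h2]
    have hee : S.cocy (G.ran g) c = S.cocy (G.ran h) c' :=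
      S.θ_inj _ _ hu1 hu2 (by rw [hθ1, hθ2, hsx])
    refine ⟨(β, g), hβF, (x, S.cocy (G.ran g) c), ⟨r1, hr1v, hr1c, ?_⟩,
      ⟨r2, hr2v, hr2c, ?_⟩⟩
    · rw [hr1e, hxc]
    · rw [hr2e, hxc', hee]
end

section
/- Let Λ be a left cancellative small category, let M be a conical monoid, and let d : Λ → M be a length function satisfying (LF1) and (LF2). Then a morphism α ∈ Λ is an atom of Λ if and only if d(α) is an atom of M. In particular, the set of atoms of Λ equals the union over atoms e of M of d⁻¹(e). -/
/-- `d : Λ → M` is a length function into the monoid `M`. -/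
def LCSC.MLenFn (C : LCSC) {M : Type} [Monoid M] (d : C.Mor → M) : Prop :=
  ∀ a b, C.src a = C.ran b → d (C.comp a b) = d a * d b

/-- (LF1): `d⁻¹(1) = Λ⁻¹`. -/
def LCSC.LF1 (C : LCSC) {M : Type} [Monoid M] (d : C.Mor → M) : Prop :=
  ∀ a, d a = 1 ↔ C.IsInvertible a

/-- (LF2): every factorization of `d(α)` in `M` lifts to a factorization of `α`. -/
def LCSC.LF2 (C : LCSC) {M : Type} [Monoid M] (d : C.Mor → M) : Prop :=
  ∀ a m₁ m₂, d a = m₁ * m₂ →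
    ∃ a₁ a₂, C.src a₁ = C.ran a₂ ∧ a = C.comp a₁ a₂ ∧ d a₁ = m₁ ∧ d a₂ = m₂

/-- The monoid `M` is conical: `m₁m₂ = 1` implies `m₁ = m₂ = 1`. -/
def Conical (M : Type) [Monoid M] : Prop :=
  ∀ m₁ m₂ : M, m₁ * m₂ = 1 → m₁ = 1 ∧ m₂ = 1

/-- `e ∈ M` is an atom: `e = m₁m₂` implies `m₁ = 1` or `m₂ = 1`. -/
def MAtom {M : Type} [Monoid M] (e : M) : Prop :=
  ∀ m₁ m₂ : M, e = m₁ * m₂ → m₁ = 1 ∨ m₂ = 1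

/-- `M` is atomic: it is generated by its atoms. -/
def AtomicMonoid (M : Type) [Monoid M] : Prop :=
  ∀ m : M, m ∈ Submonoid.closure {e : M | MAtom e}

/-- `α ∈ Λ` is an atom: whenever `α = βγ`, then `β ∈ Λ⁻¹` or `γ ∈ Λ⁻¹`. -/
def LCSC.CAtom (C : LCSC) (a : C.Mor) : Prop :=
  ∀ b c, C.src b = C.ran c → a = C.comp b c →
    C.IsInvertible b ∨ C.IsInvertible c

/-- `αΛ` is a maximal proper principal right ideal: it is properly contained in
`r(α)Λ` and maximal among principal right ideals properly contained in `r(α)Λ`. -/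
def LCSC.MaxIdeal (C : LCSC) (a : C.Mor) : Prop :=
  C.Ideal a ⊂ C.Ideal (C.ran a) ∧
  ∀ b : C.Mor, C.Ideal a ⊆ C.Ideal b → C.Ideal b ⊂ C.Ideal (C.ran a) →
    C.Ideal b = C.Ideal a

/-- For a length function `d : Λ → M` into a conical monoid
satisfying (LF1) and (LF2), a morphism `α` is an atom of `Λ` iff `d(α)` is an
atom of `M`; in particular the atoms of `Λ` are `⋃_{e atom of M} d⁻¹(e)`. -/
theorem lcsc_atom_iff_length_atom (C : LCSC) {M : Type} [Monoid M]
    (hM : Conical M) (d : C.Mor → M)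
    (hd : C.MLenFn d) (h1 : C.LF1 d) (h2 : C.LF2 d) :
    (∀ a : C.Mor, C.CAtom a ↔ MAtom (d a)) ∧
    {a : C.Mor | C.CAtom a} = ⋃ e ∈ {e : M | MAtom e}, d ⁻¹' {e} := by
  have key : ∀ a : C.Mor, C.CAtom a ↔ MAtom (d a) := by
    intro a
    constructor
    · intro hA m₁ m₂ hm
      obtain ⟨a₁, a₂, hsr, ha, h₁, h₂⟩ := h2 a m₁ m₂ hm
      rcases hA a₁ a₂ hsr ha with h | h
      · left; rw [← h₁]; exact (h1 a₁).mpr h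
      · right; rw [← h₂]; exact (h1 a₂).mpr h
    · intro hA b c hsr hbc
      have : d a = d b * d c := by rw [hbc]; exact hd b c hsr
      rcases hA (d b) (d c) this with h | h
      · exact Or.inl ((h1 b).mp h)
      · exact Or.inr ((h1 c).mp h)
  refine ⟨key, ?_⟩
  ext a
  simp only [Set.mem_setOf_eq, Set.mem_iUnion, Set.mem_preimage, Set.mem_singleton_iff, key]
  exact ⟨fun h => ⟨d a, h, rfl⟩, fun ⟨e, he, h⟩ => h ▸ he⟩
end

section
/- Let Λ be a left cancellative small category, let M be a conical atomic monoid, let d : Λ → M be a length function satisfying (LF1) and (LF2), and let B be a transversal of generators of the maximal proper principal right ideals of Λ (a subset of the atoms of Λ containing exactly one generator of each maximal proper principal right ideal). Then Λ = B*Λ⁻¹, where B* is the subcategory of Λ generated by B (together with the identities): every morphism of Λ can be written as βg with β ∈ B* and g ∈ Λ⁻¹. -/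
/-- The subcategory `B*` of `Λ` generated by a set `B` of morphisms, together
with the identities. -/
inductive GenSubcat (C : LCSC) (B : Set C.Mor) : C.Mor → Prop
  | id (v : C.Mor) : C.IsId v → GenSubcat C B v
  | of (b : C.Mor) : b ∈ B → GenSubcat C B b
  | comp (a b : C.Mor) : GenSubcat C B a → GenSubcat C B b →
      C.src a = C.ran b → GenSubcat C B (C.comp a b)

/-- `B` is a transversal of generators of the maximal proper principal right
ideals of `Λ`: a set of atoms containing exactly one generator of each maximal
proper principal right ideal. -/
def LCSC.IsTransversal (C : LCSC) (B : Set C.Mor) : Prop :=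
  (∀ b ∈ B, C.CAtom b) ∧
  ∀ a : C.Mor, C.MaxIdeal a → ∃! b, b ∈ B ∧ C.Ideal b = C.Ideal a


section Helpers

variable (C : LCSC)

lemma LCSC.mem_ideal_self (a : C.Mor) : a ∈ C.Ideal a :=
  ⟨C.src a, (C.ran_src a).symm, (C.comp_src a).symm⟩

lemma LCSC.ideal_subset {a b c : C.Mor} (hc : C.src b = C.ran c) (h : a = C.comp b c) :
    C.Ideal a ⊆ C.Ideal b := by
  rintro x ⟨c', hc', hx⟩
  have hsa : C.src c = C.ran c' := by
    rw [h, C.src_comp b c hc] at hc'; exact hc'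
  refine ⟨C.comp c c', ?_, ?_⟩
  · rw [C.ran_comp c c' hsa]; exact hc
  · rw [hx, h, C.assoc b c c' hc hsa]

lemma LCSC.isInvertible_of_isId {v : C.Mor} (h : C.IsId v) : C.IsInvertible v := by
  have hv := C.comp_src v
  rw [h.1] at hv
  exact ⟨v, by rw [h.1, h.2], by rw [h.1, h.2], by rw [hv, h.2], by rw [hv, h.1]⟩

lemma LCSC.invertible_of_ran_mem {M : Type} [Monoid M] (hM : Conical M) {d : C.Mor → M}
    (hd : C.MLenFn d) (h1 : C.LF1 d) {a : C.Mor} (h : C.ran a ∈ C.Ideal a) :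
    C.IsInvertible a := by
  obtain ⟨c, hc, he⟩ := h
  have hda : d (C.comp a c) = d a * d c := hd a c hc
  have hid : d (C.ran a) = 1 :=
    (h1 _).mpr (C.isInvertible_of_isId ⟨C.src_ran a, C.ran_ran a⟩)
  rw [← he, hid] at hda
  exact (h1 a).mp (hM _ _ hda.symm).1

lemma LCSC.exists_unit_of_ideal_eq {a b : C.Mor} (h : C.Ideal b = C.Ideal a) :
    ∃ g, C.IsInvertible g ∧ C.src b = C.ran g ∧ a = C.comp b g := by
  have ha : a ∈ C.Ideal b := by rw [h]; exact C.mem_ideal_self a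
  have hb : b ∈ C.Ideal a := by rw [← h]; exact C.mem_ideal_self b
  obtain ⟨g, hg, hag⟩ := ha
  obtain ⟨k, hk, hbk⟩ := hb
  have s1 : C.src a = C.src g := by rw [hag, C.src_comp b g hg]
  have s2 : C.src b = C.src k := by rw [hbk, C.src_comp a k hk]
  have hkg : C.src k = C.ran g := s2.symm.trans hg
  have hgk : C.src g = C.ran k := s1.symm.trans hk
  have e1 : C.comp b (C.comp g k) = C.comp b (C.src b) := by
    rw [← C.assoc b g k hg hgk, ← hag, ← hbk, C.comp_src]
  have hgkb : C.comp g k = C.src b := by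
    refine C.leftCancel b _ _ ?_ ?_ e1
    · rw [C.ran_comp g k hgk]; exact hg
    · exact (C.ran_src b).symm
  have e2 : C.comp a (C.comp k g) = C.comp a (C.src a) := by
    rw [← C.assoc a k g hk hkg, ← hbk, ← hag, C.comp_src]
  have hkga : C.comp k g = C.src a := by
    refine C.leftCancel a _ _ ?_ ?_ e2
    · rw [C.ran_comp k g hkg]; exact hk
    · exact (C.ran_src a).symm
  exact ⟨g, ⟨k, hgk, hkg, hgkb.trans hg, hkga.trans s1⟩, hg, hag⟩

lemma LCSC.ideal_eq_ran_of_invertible {b : C.Mor} (h : C.IsInvertible b) :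
    C.Ideal b = C.Ideal (C.ran b) := by
  obtain ⟨b', hb1, hb2, hb3, hb4⟩ := h
  refine Set.Subset.antisymm ?_ ?_
  · exact C.ideal_subset (C.src_ran b) (C.id_comp b).symm
  · exact C.ideal_subset hb1 hb3.symm

lemma LCSC.maxIdeal_of_d_atom {M : Type} [Monoid M] (hM : Conical M) {d : C.Mor → M}
    (hd : C.MLenFn d) (h1 : C.LF1 d) {a : C.Mor} {e : M}
    (he : MAtom e) (hne : e ≠ 1) (hda : d a = e) : C.MaxIdeal a := by
  have hsub : C.Ideal a ⊆ C.Ideal (C.ran a) :=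
    C.ideal_subset (C.src_ran a) (C.id_comp a).symm
  constructor
  · rw [Set.ssubset_iff_subset_ne]
    refine ⟨hsub, fun hcon => ?_⟩
    have hmem : C.ran a ∈ C.Ideal a := by rw [hcon]; exact C.mem_ideal_self _
    have hinv := C.invertible_of_ran_mem hM hd h1 hmem
    exact hne (hda.symm.trans ((h1 a).mpr hinv))
  · intro b hab hbr
    have hamem : a ∈ C.Ideal b := hab (C.mem_ideal_self a)
    obtain ⟨c, hc, hac⟩ := hamem
    have hdec : e = d b * d c := by rw [← hda, hac]; exact hd b c hc
    rcases he _ _ hdec with hb1 | hc1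
    · exfalso
      have hbinv := (h1 b).mp hb1
      have hranba : C.ran b = C.ran a := by rw [hac, C.ran_comp b c hc]
      have heq2 : C.Ideal b = C.Ideal (C.ran a) := by
        rw [← hranba]; exact C.ideal_eq_ran_of_invertible hbinv
      exact hbr.ne heq2
    · have hcinv := (h1 c).mp hc1
      obtain ⟨c', hc'1, hc'2, hc'3, hc'4⟩ := hcinv
      have hsa : C.src a = C.ran c' := by rw [hac, C.src_comp b c hc]; exact hc'1
      have hbc : b = C.comp a c' := by
        rw [hac, C.assoc b c c' hc hc'1, hc'3, ← hc, C.comp_src b]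
      exact Set.Subset.antisymm (C.ideal_subset hsa hbc) hab

lemma LCSC.key {M : Type} [Monoid M] (hM : Conical M) (d : C.Mor → M)
    (hd : C.MLenFn d) (h1 : C.LF1 d) (h2 : C.LF2 d)
    (B : Set C.Mor) (hB : C.IsTransversal B) :
    ∀ l : List M, (∀ e ∈ l, MAtom e) → ∀ a, d a = l.prod →
      ∃ β g, GenSubcat C B β ∧ C.IsInvertible g ∧ C.src β = C.ran g ∧ a = C.comp β g := by
  intro l
  induction l with
  | nil =>
    intro _ a ha
    rw [List.prod_nil] at ha
    exact ⟨C.ran a, a, GenSubcat.id _ ⟨C.src_ran a, C.ran_ran a⟩, (h1 a).mp ha,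
      C.src_ran a, (C.id_comp a).symm⟩
  | cons e l ih =>
    intro hmem a ha
    rw [List.prod_cons] at ha
    by_cases he1 : e = 1
    · exact ih (fun x hx => hmem x (List.mem_cons_of_mem e hx)) a
        (by rw [ha, he1, one_mul])
    · obtain ⟨a₁, a₂, h12, haeq, hd1, hd2⟩ := h2 a e l.prod ha
      have hmax : C.MaxIdeal a₁ :=
        C.maxIdeal_of_d_atom hM hd h1 (hmem e List.mem_cons_self) he1 hd1
      obtain ⟨b, ⟨hbB, hbI⟩, _⟩ := hB.2 a₁ hmax
      obtain ⟨g', hg'inv, hbg', ha1⟩ := C.exists_unit_of_ideal_eq hbI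
      have hs1 : C.src a₁ = C.src g' := by rw [ha1, C.src_comp b g' hbg']
      have hg'a2 : C.src g' = C.ran a₂ := hs1.symm.trans h12
      have hdg' : d g' = 1 := (h1 g').mpr hg'inv
      have hdnew : d (C.comp g' a₂) = l.prod := by
        rw [hd g' a₂ hg'a2, hdg', one_mul, hd2]
      obtain ⟨β', g, hβ', hginv, hβg, heq⟩ :=
        ih (fun x hx => hmem x (List.mem_cons_of_mem e hx)) _ hdnew
      have hranβ' : C.src b = C.ran β' := by
        have e1 : C.ran (C.comp β' g) = C.ran β' := C.ran_comp β' g hβg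
        have e2 : C.ran (C.comp g' a₂) = C.ran g' := C.ran_comp g' a₂ hg'a2
        rw [hbg', ← e2, heq, e1]
      refine ⟨C.comp b β', g, GenSubcat.comp b β' (GenSubcat.of b hbB) hβ' hranβ',
        hginv, ?_, ?_⟩
      · rw [C.src_comp b β' hranβ']; exact hβg
      · rw [haeq, ha1, C.assoc b g' a₂ hbg' hg'a2, heq, ← C.assoc b β' g hranβ' hβg]

end Helpers

/-- For a length function `d : Λ → M` into a conical atomic
monoid satisfying (LF1) and (LF2), and a transversal `B` of generators of the
maximal proper principal right ideals, `Λ = B*Λ⁻¹`: every morphism of `Λ` can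
be written as `βg` with `β ∈ B*` and `g ∈ Λ⁻¹`. -/
theorem lcsc_eq_genSubcat_mul_invertibles (C : LCSC) {M : Type} [Monoid M]
    (hM : Conical M) (hMa : AtomicMonoid M) (d : C.Mor → M)
    (hd : C.MLenFn d) (h1 : C.LF1 d) (h2 : C.LF2 d)
    (B : Set C.Mor) (hB : C.IsTransversal B) :
    ∀ a : C.Mor, ∃ β g, GenSubcat C B β ∧ C.IsInvertible g ∧
      C.src β = C.ran g ∧ a = C.comp β g := by
  intro a
  obtain ⟨l, hl, hlp⟩ := Submonoid.exists_list_of_mem_closure (hMa (d a))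
  exact C.key hM d hd h1 h2 B hB l (fun e he => hl e he) a hlp.symm
end

section
/- Let Λ be a left cancellative small category and let d : Λ → Γ be a length function satisfying the weak factorization property. Let α, β ∈ Λ with α ⋒ β (i.e. αΛ ∩ βΛ ≠ ∅). Then α ≤ β if and only if d(α) ≤ d(β) in Γ. In particular, if d(α) = d(β) then α ≈ β (i.e. αΛ = βΛ). -/
theorem LCSC.ideal_mono (C : LCSC) {a b : C.Mor} (h : C.le a b) :
    C.Ideal b ⊆ C.Ideal a := by
  obtain ⟨c, hc, rfl⟩ := h
  rintro x ⟨e, he, rfl⟩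
  rw [C.src_comp a c hc] at he
  exact ⟨C.comp c e, by rw [C.ran_comp c e he]; exact hc, C.assoc a c e hc he⟩

theorem LCSC.le_of_length (C : LCSC) {Q : Type} [Group Q] (Γ : Submonoid Q)
    (d : C.Mor → Q) (hd : C.LenFn Γ d) (hwfp : C.WFP Γ d)
    {a b x : C.Mor} (hx1 : x ∈ C.Ideal a) (hx2 : x ∈ C.Ideal b)
    (h : (d a)⁻¹ * d b ∈ Γ) : C.le a b := by
  obtain ⟨c, hc, rfl⟩ := hx1
  obtain ⟨e, he, hxe⟩ := hx2
  have dac : d (C.comp a c) = d a * d c := hd.2 a c hc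
  have dbe : d (C.comp b e) = d b * d e := hd.2 b e he
  have hmul : d a * d c = d b * d e := by rw [← dac, ← dbe, hxe]
  have hdc : d c = (d a)⁻¹ * d b * d e := by
    rw [mul_assoc, ← hmul, inv_mul_cancel_left]
  obtain ⟨x₁, x₂, hsx, hx, dx1, dx2, U⟩ :=
    hwfp (C.comp a c) (d a) ((d a)⁻¹ * d b * d e) (hd.1 a)
      (mul_mem h (hd.1 e)) (by rw [dac, hdc])
  obtain ⟨g₁, g₂, hg₁inv, -, hrg₁, ha, -, -⟩ := U a c hc rfl rfl hdc
  obtain ⟨b₁, b₂, hsb, hb, db1, db2, -⟩ :=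
    hwfp b (d a) ((d a)⁻¹ * d b) (hd.1 a) h (by group)
  have hsbe : C.src b₂ = C.ran e := by
    rw [← C.src_comp b₁ b₂ hsb, ← hb]; exact he
  obtain ⟨g₁', g₂', hg₁'inv, -, hrg₁', hb₁, -, -⟩ :=
    U b₁ (C.comp b₂ e) (by rw [C.ran_comp b₂ e hsbe]; exact hsb)
      (by rw [hxe, hb, C.assoc b₁ b₂ e hsb hsbe]) db1
      (by rw [hd.2 b₂ e hsbe, db2])
  obtain ⟨h₁, hi1, hi2, hi3, hi4⟩ := hg₁inv
  have sah : C.src a = C.ran h₁ := by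
    rw [ha, C.src_comp x₁ g₁ hrg₁]; exact hi1
  have hx₁a : x₁ = C.comp a h₁ := by
    rw [ha, C.assoc x₁ g₁ h₁ hrg₁ hi1, hi3, ← hrg₁, C.comp_src]
  have hk : C.src h₁ = C.ran g₁' := by rw [hi2, ← hrg₁]; exact hrg₁'
  have hb₁a : b₁ = C.comp a (C.comp h₁ g₁') := by
    rw [hb₁, hx₁a, C.assoc a h₁ g₁' sah hk]
  have hskb : C.src (C.comp h₁ g₁') = C.ran b₂ := by
    rw [C.src_comp h₁ g₁' hk, ← C.src_comp x₁ g₁' hrg₁', ← hb₁]; exact hsb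
  refine ⟨C.comp (C.comp h₁ g₁') b₂, ?_, ?_⟩
  · rw [C.ran_comp _ b₂ hskb, C.ran_comp h₁ g₁' hk]; exact sah
  · rw [hb, hb₁a, C.assoc a _ b₂ (by rw [C.ran_comp h₁ g₁' hk]; exact sah) hskb]

/-- If `d : Λ → Γ` is a length function satisfying the WFP and
`α ⋒ β` (i.e. `αΛ ∩ βΛ ≠ ∅`), then `α ≤ β` iff `d(α) ≤ d(β)` in `Γ` (i.e.
`d(α)⁻¹ d(β) ∈ Γ`); in particular `d(α) = d(β)` implies `αΛ = βΛ`. -/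
theorem lcsc_wfp_le_iff_length_le (C : LCSC) {Q : Type} [Group Q]
    (Γ : Submonoid Q) (hΓ : ∀ q ∈ Γ, q⁻¹ ∈ Γ → q = 1)
    (d : C.Mor → Q) (hd : C.LenFn Γ d) (hwfp : C.WFP Γ d)
    (a b : C.Mor) (hab : (C.Ideal a ∩ C.Ideal b).Nonempty) :
    (C.le a b ↔ (d a)⁻¹ * d b ∈ Γ) ∧
    (d a = d b → C.Ideal a = C.Ideal b) := by
  obtain ⟨x, hx1, hx2⟩ := hab
  constructor
  · constructor
    · rintro ⟨c, hc, rfl⟩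
      rw [hd.2 a c hc, inv_mul_cancel_left]
      exact hd.1 c
    · exact fun h => C.le_of_length Γ d hd hwfp hx1 hx2 h
  · intro hdab
    have h1 : C.le a b := C.le_of_length Γ d hd hwfp hx1 hx2
      (by rw [hdab, inv_mul_cancel]; exact one_mem Γ)
    have h2 : C.le b a := C.le_of_length Γ d hd hwfp hx2 hx1
      (by rw [hdab, inv_mul_cancel]; exact one_mem Γ)
    exact Set.Subset.antisymm (C.ideal_mono h2) (C.ideal_mono h1)
end
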